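/- Let φ be an even integrable weight function on ℝ. For real numbers e_1,...,e_n and a_1,...,a_n, the statistic ∫_ℝ |n^{-1/2} Σ_j a_j exp(i t e_j)|² φ(t) dt built from the complex exponential equals the statistic ∫_ℝ |n^{-1/2} Σ_j a_j (cos(t e_j) + sin(t e_j))|² φ(t) dt built from the real transformation cos + sin. -/

import Mathlib

open MeasureTheory Real

lemma odd_integral_zero (g : ℝ → ℝ) (hodd : ∀ t, g (-t) = -g t) :
    ∫ t : ℝ, g t = 0 := by
  have h1 : ∫ t : ℝ, g (-t) = ∫ t : ℝ, g t := integral_neg_eq_self g volume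
  have h2 : ∫ t : ℝ, g (-t) = -∫ t : ℝ, g t := by
    simp only [hodd]; exact integral_neg g
  linarith [h1, h2]

theorem stmt_2 (n : ℕ) (hn : 0 < n) (e a : Fin n → ℝ) (φ : ℝ → ℝ)
    (hmeas : Measurable φ) (hpos : ∀ t, 0 ≤ φ t) (heven : ∀ t, φ (-t) = φ t)
    (hint : Integrable φ) :
    ∫ t : ℝ, (‖((Real.sqrt n : ℝ) : ℂ)⁻¹ *
        ∑ j, (a j : ℂ) * Complex.exp (Complex.I * (t : ℂ) * (e j : ℂ))‖)^2 * φ t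
      = ∫ t : ℝ, ((Real.sqrt n)⁻¹ *
          ∑ j, a j * (Real.cos (t * e j) + Real.sin (t * e j)))^2 * φ t := by
  set C : ℝ → ℝ := fun t => ∑ j, a j * Real.cos (t * e j) with hC
  set S : ℝ → ℝ := fun t => ∑ j, a j * Real.sin (t * e j) with hS
  have hCc : Continuous C := by fun_prop
  have hSc : Continuous S := by fun_prop
  have hCbd : ∀ t, |C t| ≤ ∑ j, |a j| := by
    intro t
    refine (Finset.abs_sum_le_sum_abs _ _).trans (Finset.sum_le_sum fun j _ => ?_)
    rw [abs_mul]
    exact mul_le_of_le_one_right (abs_nonneg _) (Real.abs_cos_le_one _)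
  have hSbd : ∀ t, |S t| ≤ ∑ j, |a j| := by
    intro t
    refine (Finset.abs_sum_le_sum_abs _ _).trans (Finset.sum_le_sum fun j _ => ?_)
    rw [abs_mul]
    exact mul_le_of_le_one_right (abs_nonneg _) (Real.abs_sin_le_one _)
  have hL : ∀ t : ℝ, (‖((Real.sqrt n : ℝ) : ℂ)⁻¹ *
        ∑ j, (a j : ℂ) * Complex.exp (Complex.I * (t : ℂ) * (e j : ℂ))‖)^2 * φ t
      = ((Real.sqrt n)⁻¹)^2 * ((C t)^2 + (S t)^2) * φ t := by
    intro t
    have hsum : (∑ j, (a j : ℂ) * Complex.exp (Complex.I * (t : ℂ) * (e j : ℂ)))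
        = (C t : ℂ) + (S t : ℂ) * Complex.I := by
      have : ∀ j, Complex.I * (t : ℂ) * (e j : ℂ) = ((t * e j : ℝ) : ℂ) * Complex.I := by
        intro j; push_cast; ring
      simp_rw [this, Complex.exp_mul_I, ← Complex.ofReal_cos, ← Complex.ofReal_sin,
        hC, hS]
      push_cast
      rw [Finset.sum_mul, ← Finset.sum_add_distrib]
      exact Finset.sum_congr rfl fun j _ => by ring
    rw [hsum, norm_mul, mul_pow, norm_inv, Complex.norm_real, Real.norm_eq_abs,
      abs_of_nonneg (Real.sqrt_nonneg _), Complex.norm_add_mul_I,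
      Real.sq_sqrt (by positivity)]
  have hR : ∀ t : ℝ, ((Real.sqrt n)⁻¹ *
          ∑ j, a j * (Real.cos (t * e j) + Real.sin (t * e j)))^2 * φ t
      = ((Real.sqrt n)⁻¹)^2 * ((C t)^2 + (S t)^2) * φ t
        + (((Real.sqrt n)⁻¹)^2 * (2 * C t * S t)) * φ t := by
    intro t
    have : (∑ j, a j * (Real.cos (t * e j) + Real.sin (t * e j))) = C t + S t := by
      rw [hC, hS, ← Finset.sum_add_distrib]
      congr 1; ext j; ring
    rw [this]; ring
  rw [integral_congr_ae (Filter.Eventually.of_forall hL),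
      integral_congr_ae (Filter.Eventually.of_forall hR)]
  have hint1 : Integrable (fun t => ((Real.sqrt n)⁻¹)^2 * ((C t)^2 + (S t)^2) * φ t) := by
    apply hint.bdd_mul (c := ((Real.sqrt n)⁻¹)^2 * (2 * (∑ j, |a j|)^2))
    · exact (continuous_const.mul ((hCc.pow 2).add (hSc.pow 2))).aestronglyMeasurable
    · refine Filter.Eventually.of_forall fun t => ?_
      rw [Real.norm_eq_abs, abs_mul, abs_of_nonneg (by positivity : (0:ℝ) ≤ ((Real.sqrt n)⁻¹)^2)]
      have h1 : (C t)^2 ≤ (∑ j, |a j|)^2 := by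
        rw [← sq_abs]; exact pow_le_pow_left₀ (abs_nonneg _) (hCbd t) 2
      have h2 : (S t)^2 ≤ (∑ j, |a j|)^2 := by
        rw [← sq_abs]; exact pow_le_pow_left₀ (abs_nonneg _) (hSbd t) 2
      have : |(C t)^2 + (S t)^2| = (C t)^2 + (S t)^2 := abs_of_nonneg (by positivity)
      nlinarith [sq_nonneg ((Real.sqrt n)⁻¹)]
  have hint2 : Integrable (fun t => (((Real.sqrt n)⁻¹)^2 * (2 * C t * S t)) * φ t) := by
    apply hint.bdd_mul (c := ((Real.sqrt n)⁻¹)^2 * (2 * (∑ j, |a j|)^2))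
    · exact (continuous_const.mul ((continuous_const.mul hCc).mul hSc)).aestronglyMeasurable
    · refine Filter.Eventually.of_forall fun t => ?_
      rw [Real.norm_eq_abs, abs_mul, abs_of_nonneg (by positivity : (0:ℝ) ≤ ((Real.sqrt n)⁻¹)^2)]
      have h1 := hCbd t
      have h2 := hSbd t
      have hnn : 0 ≤ ∑ j, |a j| := Finset.sum_nonneg fun j _ => abs_nonneg _
      have : |2 * C t * S t| = 2 * (|C t| * |S t|) := by
        rw [abs_mul, abs_mul]; simp [mul_assoc]
      rw [this]
      have : |C t| * |S t| ≤ (∑ j, |a j|)^2 := by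
        calc |C t| * |S t| ≤ (∑ j, |a j|) * (∑ j, |a j|) :=
          mul_le_mul h1 h2 (abs_nonneg _) hnn
        _ = (∑ j, |a j|)^2 := (sq _).symm
      nlinarith [sq_nonneg ((Real.sqrt n)⁻¹)]
  rw [integral_add hint1 hint2]
  have hzero : ∫ t : ℝ, (((Real.sqrt n)⁻¹)^2 * (2 * C t * S t)) * φ t = 0 := by
    apply odd_integral_zero
    intro t
    have hCe : C (-t) = C t := by
      simp [hC, Real.cos_neg, neg_mul]
    have hSo : S (-t) = -S t := by
      simp [hS, Real.sin_neg, neg_mul, Finset.sum_neg_distrib, mul_neg]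
    rw [hCe, hSo, heven]; ring
  rw [hzero, add_zero]
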